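/- Let ω ∈ Ω, let u ∈ X₂ be nonzero and let λ ∈ ℝ. If lim_{t→∞} (1/t) ln‖U^{(1)}_ω(t)(iu)‖₁ = λ, then lim_{t→∞} (1/t) ln‖U^{(2)}_ω(t)u‖₂ = λ. -/

import Mathlib

open Filter Topology

/-- if `(1/t) ln‖U¹_ω(t)(iu)‖₁ → λ` as `t → ∞`, then
`(1/t) ln‖U²_ω(t)u‖₂ → λ` as `t → ∞`, for nonzero `u ∈ X₂`. -/
theorem stmt_13
    {X₁ : Type*} [NormedAddCommGroup X₁] [NormedSpace ℝ X₁]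
    {X₂ : Type*} [NormedAddCommGroup X₂] [NormedSpace ℝ X₂]
    (i : X₂ →L[ℝ] X₁) (hi : Function.Injective i)
    {Ω : Type*} (θ : ℝ → Ω → Ω)
    (hθ0 : ∀ ω, θ 0 ω = ω) (hθadd : ∀ t s ω, θ (t + s) ω = θ t (θ s ω))
    (U₁ : Ω → ℝ → (X₁ →L[ℝ] X₁)) (U₂ : Ω → ℝ → (X₂ →L[ℝ] X₂))
    (hU₁0 : ∀ ω, U₁ ω 0 = ContinuousLinearMap.id ℝ X₁)
    (hU₂0 : ∀ ω, U₂ ω 0 = ContinuousLinearMap.id ℝ X₂)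
    (hU₁c : ∀ ω t s, 0 ≤ t → 0 ≤ s → (U₁ (θ s ω) t).comp (U₁ ω s) = U₁ ω (t + s))
    (hU₂c : ∀ ω t s, 0 ≤ t → 0 ≤ s → (U₂ (θ s ω) t).comp (U₂ ω s) = U₂ ω (t + s))
    (hA2 : ∀ ω t, 0 ≤ t → (U₁ ω t).comp i = i.comp (U₂ ω t))
    (U₁₂ : Ω → (X₁ →L[ℝ] X₂))
    (hA3₁ : ∀ ω, U₁ ω 1 = i.comp (U₁₂ ω))
    (hA3₂ : ∀ ω, U₂ ω 1 = (U₁₂ ω).comp i)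
    (M : ℝ) (hM : 0 < M) (hMb : ∀ ω, ‖U₁₂ ω‖ ≤ M)
    (ω : Ω) (u : X₂) (hu : u ≠ 0) (lam : ℝ)
    (h : Tendsto (fun t : ℝ => Real.log ‖U₁ ω t (i u)‖ / t) atTop (𝓝 lam)) :
    Tendsto (fun t : ℝ => Real.log ‖U₂ ω t u‖ / t) atTop (𝓝 lam) := by
  -- relation from (A2)
  have hrel : ∀ t : ℝ, 0 ≤ t → i (U₂ ω t u) = U₁ ω t (i u) := by
    intro t ht
    have := congrArg (fun T : X₂ →L[ℝ] X₁ => T u) (hA2 ω t ht)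
    simpa using this.symm
  by_cases hcase : ∀ t : ℝ, 0 ≤ t → U₂ ω t u ≠ 0
  · -- nondegenerate case
    have hne1 : ∀ t : ℝ, 0 ≤ t → U₁ ω t (i u) ≠ 0 := by
      intro t ht h0
      exact hcase t ht (hi (by rw [hrel t ht, h0, map_zero]))
    have hiu : i u ≠ 0 := by
      intro h0; exact hu (hi (by simpa using h0))
    have hinorm : (0:ℝ) < ‖i‖ := by
      have h1 : 0 < ‖i u‖ := norm_pos_iff.mpr hiu
      have h2 : ‖i u‖ ≤ ‖i‖ * ‖u‖ := i.le_opNorm u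
      have h3 : 0 < ‖u‖ := norm_pos_iff.mpr hu
      nlinarith
    -- lower bound: log‖U₁ ω t (i u)‖ ≤ log‖i‖ + log‖U₂ ω t u‖
    have hlowb : ∀ t : ℝ, 1 ≤ t →
        Real.log ‖U₁ ω t (i u)‖ / t - Real.log ‖i‖ / t
          ≤ Real.log ‖U₂ ω t u‖ / t := by
      intro t ht
      have ht0 : (0:ℝ) < t := lt_of_lt_of_le one_pos ht
      have ht0' : (0:ℝ) ≤ t := ht0.le
      have hpos : 0 < ‖U₁ ω t (i u)‖ := norm_pos_iff.mpr (hne1 t ht0')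
      have hpos2 : 0 < ‖U₂ ω t u‖ := norm_pos_iff.mpr (hcase t ht0')
      have hle : ‖U₁ ω t (i u)‖ ≤ ‖i‖ * ‖U₂ ω t u‖ := by
        rw [← hrel t ht0']; exact i.le_opNorm _
      have hlog : Real.log ‖U₁ ω t (i u)‖ ≤ Real.log ‖i‖ + Real.log ‖U₂ ω t u‖ := by
        calc Real.log ‖U₁ ω t (i u)‖ ≤ Real.log (‖i‖ * ‖U₂ ω t u‖) :=
              Real.log_le_log hpos hle
          _ = Real.log ‖i‖ + Real.log ‖U₂ ω t u‖ :=
              Real.log_mul (ne_of_gt hinorm) (ne_of_gt hpos2)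
      rw [div_sub_div_same, div_le_div_iff_of_pos_right ht0]
      linarith
    -- upper bound: ‖U₂ ω t u‖ ≤ M * ‖U₁ ω (t-1) (i u)‖ for t ≥ 1
    have hupb : ∀ t : ℝ, 2 ≤ t →
        Real.log ‖U₂ ω t u‖ / t
          ≤ Real.log M / t + (Real.log ‖U₁ ω (t-1) (i u)‖ / (t-1)) * ((t-1)/t) := by
      intro t ht
      have ht0 : (0:ℝ) < t := by linarith
      have ht1 : (0:ℝ) ≤ t - 1 := by linarith
      have ht1pos : (0:ℝ) < t - 1 := by linarith
      have key : U₂ ω t u = U₁₂ (θ (t-1) ω) (U₁ ω (t-1) (i u)) := by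
        have hcoc := congrArg (fun T : X₂ →L[ℝ] X₂ => T u)
          (hU₂c ω 1 (t-1) zero_le_one ht1)
        simp only [ContinuousLinearMap.comp_apply] at hcoc
        have ht' : 1 + (t - 1) = t := by ring
        rw [ht'] at hcoc
        rw [← hcoc, hA3₂ (θ (t-1) ω)]
        simp only [ContinuousLinearMap.comp_apply]
        rw [hrel (t-1) ht1]
      have hle : ‖U₂ ω t u‖ ≤ M * ‖U₁ ω (t-1) (i u)‖ := by
        rw [key]
        calc ‖U₁₂ (θ (t-1) ω) (U₁ ω (t-1) (i u))‖
            ≤ ‖U₁₂ (θ (t-1) ω)‖ * ‖U₁ ω (t-1) (i u)‖ := (U₁₂ _).le_opNorm _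
          _ ≤ M * ‖U₁ ω (t-1) (i u)‖ := by
              gcongr; exact hMb _
      have hpos2 : 0 < ‖U₂ ω t u‖ := norm_pos_iff.mpr (hcase t ht0.le)
      have hpos1 : 0 < ‖U₁ ω (t-1) (i u)‖ := norm_pos_iff.mpr (hne1 (t-1) ht1)
      have hlog : Real.log ‖U₂ ω t u‖ ≤ Real.log M + Real.log ‖U₁ ω (t-1) (i u)‖ := by
        calc Real.log ‖U₂ ω t u‖ ≤ Real.log (M * ‖U₁ ω (t-1) (i u)‖) :=
              Real.log_le_log hpos2 hle
          _ = Real.log M + Real.log ‖U₁ ω (t-1) (i u)‖ :=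
              Real.log_mul (ne_of_gt hM) (ne_of_gt hpos1)
      have heq : (Real.log ‖(U₁ ω (t-1)) (i u)‖ / (t-1)) * ((t-1)/t)
          = Real.log ‖(U₁ ω (t-1)) (i u)‖ / t := by
        field_simp
      rw [heq, ← add_div, div_le_div_iff_of_pos_right ht0]
      exact hlog
    -- limits of the bounding functions
    have hinv : Tendsto (fun t : ℝ => t⁻¹) atTop (𝓝 0) := tendsto_inv_atTop_zero
    have hlowlim : Tendsto (fun t : ℝ =>
        Real.log ‖U₁ ω t (i u)‖ / t - Real.log ‖i‖ / t) atTop (𝓝 lam) := by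
      have h2 : Tendsto (fun t : ℝ => Real.log ‖i‖ / t) atTop (𝓝 0) := by
        simpa [div_eq_mul_inv] using hinv.const_mul (Real.log ‖i‖)
      simpa using h.sub h2
    have hshift : Tendsto (fun t : ℝ =>
        Real.log ‖U₁ ω (t-1) (i u)‖ / (t-1)) atTop (𝓝 lam) := by
      have := h.comp (tendsto_atTop_add_const_right atTop (-1) tendsto_id)
      simpa [Function.comp_def, sub_eq_add_neg] using this
    have hratio : Tendsto (fun t : ℝ => (t-1)/t) atTop (𝓝 1) := by
      have h1 : Tendsto (fun t : ℝ => 1 - t⁻¹) atTop (𝓝 1) := by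
        simpa using tendsto_const_nhds.sub hinv
      refine h1.congr' ?_
      filter_upwards [eventually_gt_atTop (0:ℝ)] with t ht
      field_simp
    have hupplim : Tendsto (fun t : ℝ =>
        Real.log M / t + (Real.log ‖U₁ ω (t-1) (i u)‖ / (t-1)) * ((t-1)/t))
        atTop (𝓝 lam) := by
      have h2 : Tendsto (fun t : ℝ => Real.log M / t) atTop (𝓝 0) := by
        simpa [div_eq_mul_inv] using hinv.const_mul (Real.log M)
      simpa using h2.add (hshift.mul hratio)
    exact tendsto_of_tendsto_of_tendsto_of_le_of_le' hlowlim hupplim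
      (by filter_upwards [eventually_ge_atTop (1:ℝ)] with t ht using hlowb t ht)
      (by filter_upwards [eventually_ge_atTop (2:ℝ)] with t ht using hupb t ht)
  · push_neg at hcase
    obtain ⟨t₀, ht₀, hz⟩ := hcase
    have hzero : ∀ t : ℝ, t₀ ≤ t → U₂ ω t u = 0 := by
      intro t ht
      have hcoc := congrArg (fun T : X₂ →L[ℝ] X₂ => T u)
        (hU₂c ω (t - t₀) t₀ (by linarith) ht₀)
      simp only [ContinuousLinearMap.comp_apply] at hcoc
      have ht' : t - t₀ + t₀ = t := by ring
      rw [ht'] at hcoc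
      rw [← hcoc, hz, map_zero]
    have hzero1 : ∀ t : ℝ, t₀ ≤ t → U₁ ω t (i u) = 0 := by
      intro t ht
      rw [← hrel t (le_trans ht₀ ht), hzero t ht, map_zero]
    have hev : (fun t : ℝ => Real.log ‖U₁ ω t (i u)‖ / t) =ᶠ[atTop] fun _ => (0:ℝ) := by
      filter_upwards [eventually_ge_atTop t₀] with t ht
      rw [hzero1 t ht, norm_zero, Real.log_zero, zero_div]
    have hlam : lam = 0 := tendsto_nhds_unique h ((tendsto_congr' hev).mpr tendsto_const_nhds)
    have hev2 : (fun t : ℝ => Real.log ‖U₂ ω t u‖ / t) =ᶠ[atTop] fun _ => (0:ℝ) := by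
      filter_upwards [eventually_ge_atTop t₀] with t ht
      rw [hzero t ht, norm_zero, Real.log_zero, zero_div]
    rw [hlam]
    exact (tendsto_congr' hev2).mpr tendsto_const_nhds
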